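/- The function f defined on C \ λ(A) by f(s) = (A - sI)^{-1} b / (c^T (A - sI)^{-1} b) extends to an entire (analytic on all of C) function, with value P e_j / (c^T P e_j) at each eigenvalue d_{jj}, provided c^T (A - sI)^{-1} b ≠ 0 for all s ∉ λ(A) and c^T P e_k ≠ 0, e_k^T P^{-1} b ≠ 0 for all k. Specifically, f(s) equals Adj(A - sI) b / (c^T Adj(A - sI) b) wherever the denominator is nonzero, and the latter is a ratio of polynomial (hence entire) vector-valued and scalar functions with nonvanishing denominator at the eigenvalues. -/

import Mathlib

open Matrix Finset

private lemma det_diff {m : ℕ} {M : ℂ → Matrix (Fin m) (Fin m) ℂ}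
    (h : ∀ i j, Differentiable ℂ fun s => M s i j) :
    Differentiable ℂ fun s => (M s).det := by
  simp only [Matrix.det_apply']
  exact Differentiable.fun_sum fun σ _ =>
    (Differentiable.fun_finset_prod fun i _ => h (σ i) i).const_mul _

private lemma entry_diff {m : ℕ} (A : Matrix (Fin m) (Fin m) ℂ) (i j : Fin m) :
    Differentiable ℂ fun s : ℂ => (A - s • (1 : Matrix (Fin m) (Fin m) ℂ)) i j := by
  simp only [Matrix.sub_apply, Matrix.smul_apply, Matrix.one_apply, smul_eq_mul]
  exact (differentiable_const _).sub (differentiable_id.mul (differentiable_const _))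

private lemma adj_entry_diff {m : ℕ} (A : Matrix (Fin m) (Fin m) ℂ) (i j : Fin m) :
    Differentiable ℂ fun s : ℂ =>
      (A - s • (1 : Matrix (Fin m) (Fin m) ℂ)).adjugate i j := by
  simp only [adjugate_apply]
  apply det_diff
  intro k l
  rcases eq_or_ne k j with rfl | hk
  · simp only [updateRow_self]
    exact differentiable_const _
  · simp only [updateRow_apply, if_neg hk]
    exact entry_diff A k l

private lemma adj_of_unit {m : ℕ} (Q : Matrix (Fin m) (Fin m) ℂ) (h : IsUnit Q.det) :
    Q.adjugate = Q.det • Q⁻¹ := by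
  rw [Matrix.inv_def, smul_smul, Ring.mul_inverse_cancel _ h, one_smul]

theorem stmt_3 {n : ℕ}
    (P : Matrix (Fin n) (Fin n) ℂ) (hP : IsUnit P)
    (d : Fin n → ℂ) (hd : Function.Injective d)
    (A : Matrix (Fin n) (Fin n) ℂ) (hA : A = P * Matrix.diagonal d * P⁻¹)
    (b c : Fin n → ℂ)
    (hden : ∀ s : ℂ, (∀ k : Fin n, s ≠ d k) →
      c ⬝ᵥ (A - s • (1 : Matrix (Fin n) (Fin n) ℂ))⁻¹.mulVec b ≠ 0)
    (hres : ∀ k : Fin n,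
      (c ⬝ᵥ P.mulVec (Pi.single k 1)) ≠ 0 ∧ (P⁻¹.mulVec b k) ≠ 0) :
    ∃ F : ℂ → (Fin n → ℂ),
      Differentiable ℂ F ∧
      (∀ s : ℂ, (∀ k : Fin n, s ≠ d k) →
        F s = (c ⬝ᵥ (A - s • (1 : Matrix (Fin n) (Fin n) ℂ))⁻¹.mulVec b)⁻¹ •
          (A - s • (1 : Matrix (Fin n) (Fin n) ℂ))⁻¹.mulVec b) ∧
      (∀ j : Fin n,
        F (d j) = (c ⬝ᵥ P.mulVec (Pi.single j 1))⁻¹ • P.mulVec (Pi.single j 1)) ∧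
      (∀ s : ℂ,
        c ⬝ᵥ (A - s • (1 : Matrix (Fin n) (Fin n) ℂ)).adjugate.mulVec b ≠ 0 →
        F s = (c ⬝ᵥ (A - s • (1 : Matrix (Fin n) (Fin n) ℂ)).adjugate.mulVec b)⁻¹ •
          (A - s • (1 : Matrix (Fin n) (Fin n) ℂ)).adjugate.mulVec b) := by
  set g : ℂ → Fin n → ℂ :=
    fun s => (A - s • (1 : Matrix (Fin n) (Fin n) ℂ)).adjugate.mulVec b with hg
  set h : ℂ → ℂ := fun s => c ⬝ᵥ g s with hh
  have hPd : IsUnit P.det := (isUnit_iff_isUnit_det P).mp hP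
  have hPd' : IsUnit P⁻¹.det := isUnit_nonsing_inv_det P hPd
  -- decomposition
  have hM : ∀ s : ℂ, A - s • (1 : Matrix (Fin n) (Fin n) ℂ)
      = P * diagonal (fun i => d i - s) * P⁻¹ := by
    intro s
    have h1 : s • (1 : Matrix (Fin n) (Fin n) ℂ) = P * (s • 1) * P⁻¹ := by
      rw [Matrix.mul_smul, Matrix.mul_one, Matrix.smul_mul,
        Matrix.mul_nonsing_inv P hPd]
    rw [hA, h1, ← Matrix.sub_mul, ← Matrix.mul_sub, smul_one_eq_diagonal,
      diagonal_sub]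
  -- determinant
  have hdet : ∀ s : ℂ, (A - s • (1 : Matrix (Fin n) (Fin n) ℂ)).det
      = ∏ i, (d i - s) := by
    intro s
    rw [hM s, Matrix.det_conj hP, det_diagonal]
  -- adjugate of conjugation
  have hconj : ∀ N : Matrix (Fin n) (Fin n) ℂ,
      (P * N * P⁻¹).adjugate = P * N.adjugate * P⁻¹ := by
    intro N
    rw [adjugate_mul_distrib, adjugate_mul_distrib, adj_of_unit P hPd,
      adj_of_unit P⁻¹ hPd', Matrix.nonsing_inv_nonsing_inv P hPd,
      Matrix.smul_mul, Matrix.mul_smul, Matrix.mul_smul, smul_smul,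
      Matrix.det_nonsing_inv_mul_det P hPd, one_smul, Matrix.mul_assoc]
  -- adjugate at eigenvalues
  have hadj : ∀ j : Fin n, (A - d j • (1 : Matrix (Fin n) (Fin n) ℂ)).adjugate
      = P * diagonal (fun k => ∏ i ∈ univ.erase k, (d i - d j)) * P⁻¹ := by
    intro j
    rw [hM (d j), hconj, adjugate_diagonal]
  set w : Fin n → ℂ := fun j => ∏ i ∈ univ.erase j, (d i - d j) with hw
  have hwne : ∀ j, w j ≠ 0 := by
    intro j
    refine Finset.prod_ne_zero_iff.mpr fun i hi => sub_ne_zero.mpr fun hij => ?_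
    exact (Finset.mem_erase.mp hi).1 (hd hij)
  -- g at eigenvalues
  have hg_eig : ∀ j : Fin n,
      g (d j) = (w j * P⁻¹.mulVec b j) • P.mulVec (Pi.single j 1) := by
    intro j
    rw [hg]
    simp only [hadj j]
    rw [← Matrix.mulVec_mulVec, ← Matrix.mulVec_mulVec]
    have hdiagv : (diagonal fun k => ∏ i ∈ univ.erase k, (d i - d j)).mulVec
        (P⁻¹.mulVec b) = (w j * P⁻¹.mulVec b j) • (Pi.single j 1 : Fin n → ℂ) := by
      funext k
      rcases eq_or_ne k j with rfl | hk
      · simp [mulVec_diagonal, hw]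
      · rw [mulVec_diagonal]
        have : (∏ i ∈ univ.erase k, (d i - d j)) = 0 :=
          Finset.prod_eq_zero (Finset.mem_erase.mpr ⟨Ne.symm hk, Finset.mem_univ j⟩)
            (sub_self _)
        simp [this, Pi.single_eq_of_ne hk]
    rw [hdiagv, Matrix.mulVec_smul]
  have hh_eig : ∀ j : Fin n,
      h (d j) = (w j * P⁻¹.mulVec b j) * (c ⬝ᵥ P.mulVec (Pi.single j 1)) := by
    intro j
    rw [hh]
    simp only [hg_eig j, dotProduct_smul, smul_eq_mul]
  -- h never vanishes
  have hgalt : ∀ s : ℂ, (∀ k : Fin n, s ≠ d k) →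
      g s = (∏ i, (d i - s)) • (A - s • (1 : Matrix (Fin n) (Fin n) ℂ))⁻¹.mulVec b
        ∧ (∏ i, (d i - s)) ≠ 0 := by
    intro s hs
    have hdne : (∏ i, (d i - s)) ≠ 0 :=
      Finset.prod_ne_zero_iff.mpr fun i _ => sub_ne_zero.mpr fun e => (hs i) e.symm
    have hinv : (A - s • (1 : Matrix (Fin n) (Fin n) ℂ))⁻¹
        = (∏ i, (d i - s))⁻¹ • (A - s • (1 : Matrix (Fin n) (Fin n) ℂ)).adjugate := by
      rw [Matrix.inv_def, hdet s, Ring.inverse_eq_inv]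
    refine ⟨?_, hdne⟩
    rw [hinv, Matrix.smul_mulVec, smul_smul, mul_inv_cancel₀ hdne, one_smul]
  have hhne : ∀ s : ℂ, h s ≠ 0 := by
    intro s
    by_cases hs : ∀ k : Fin n, s ≠ d k
    · obtain ⟨hgs, hdne⟩ := hgalt s hs
      rw [hh]
      simp only [hgs, dotProduct_smul, smul_eq_mul]
      exact mul_ne_zero hdne (hden s hs)
    · push_neg at hs
      obtain ⟨j, rfl⟩ := hs
      rw [hh_eig j]
      exact mul_ne_zero (mul_ne_zero (hwne j) (hres j).2) (hres j).1
  -- differentiability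
  have hgd : ∀ i : Fin n, Differentiable ℂ fun s => g s i := by
    intro i
    simp only [hg, mulVec, dotProduct]
    exact Differentiable.fun_sum fun j _ => (adj_entry_diff A i j).mul_const _
  have hhd : Differentiable ℂ h := by
    simp only [hh, dotProduct]
    exact Differentiable.fun_sum fun i _ => (hgd i).const_mul _
  refine ⟨fun s => (h s)⁻¹ • g s, ?_, ?_, ?_, fun s _ => rfl⟩
  · rw [differentiable_pi]
    intro i
    simp only [Pi.smul_apply, smul_eq_mul]
    exact (hhd.inv hhne).mul (hgd i)
  · intro s hs
    show (h s)⁻¹ • g s = _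
    obtain ⟨hgs, hdne⟩ := hgalt s hs
    have hhs : h s = (∏ i, (d i - s)) *
        (c ⬝ᵥ (A - s • (1 : Matrix (Fin n) (Fin n) ℂ))⁻¹.mulVec b) := by
      rw [hh]; simp only [hgs, dotProduct_smul, smul_eq_mul]
    have hx : (h s)⁻¹ * (∏ i, (d i - s))
        = (c ⬝ᵥ (A - s • (1 : Matrix (Fin n) (Fin n) ℂ))⁻¹.mulVec b)⁻¹ := by
      rw [hhs, mul_inv, mul_comm, ← mul_assoc, mul_inv_cancel₀ hdne, one_mul]
    rw [hgs, smul_smul, hx]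
  · intro j
    show (h (d j))⁻¹ • g (d j) = _
    have ha : (w j * P⁻¹.mulVec b j) ≠ 0 := mul_ne_zero (hwne j) (hres j).2
    have hx : (h (d j))⁻¹ * (w j * P⁻¹.mulVec b j)
        = (c ⬝ᵥ P.mulVec (Pi.single j 1))⁻¹ := by
      rw [hh_eig j, mul_inv, mul_comm, ← mul_assoc, mul_inv_cancel₀ ha, one_mul]
    rw [hg_eig j, smul_smul, hx]
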